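/- Let 0 < q < 1. Then (1/π)·∫₀^{2π} (q − 2√q·cos θ)²·sin²θ / (1 + q − 2√q·cos θ) dθ = q. -/

import Mathlib

/-- For `0 < q < 1`,
`(1/π)·∫₀^{2π} (q − 2√q·cos θ)²·sin²θ/(1 + q − 2√q·cos θ) dθ = q`. -/
theorem stmt_10 (q : ℝ) (hq0 : 0 < q) (hq1 : q < 1) :
    (1 / Real.pi) * ∫ θ in (0 : ℝ)..(2 * Real.pi),
        (q - 2 * Real.sqrt q * Real.cos θ) ^ 2 * Real.sin θ ^ 2
          / (1 + q - 2 * Real.sqrt q * Real.cos θ)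
      = q := by
  set s := Real.sqrt q with hsdef
  have hs0 : 0 < s := Real.sqrt_pos.2 hq0
  have hs1 : s < 1 := by
    rw [hsdef, show (1:ℝ) = Real.sqrt 1 by simp]
    exact Real.sqrt_lt_sqrt hq0.le hq1
  have hs2 : s ^ 2 = q := Real.sq_sqrt hq0.le
  have h1 : ∀ θ : ℝ, 0 < 1 - s * Real.cos θ := by
    intro θ
    nlinarith [Real.cos_le_one θ, Real.neg_one_le_cos θ]
  have hD : ∀ θ : ℝ, 0 < 1 + q - 2 * s * Real.cos θ := by
    intro θ
    nlinarith [Real.cos_le_one θ, sq_nonneg (1 - s)]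
  set H : ℝ → ℝ := fun θ =>
    (q - 1) * (θ / 2 - Real.sin (2 * θ) / 4) - (2 * s / 3) * Real.sin θ ^ 3
      + (1 + q) / (4 * q) * θ + s / (2 * q) * Real.sin θ
      - (1 - q) / (4 * q) *
          (θ + 2 * Real.arctan (s * Real.sin θ / (1 - s * Real.cos θ))) with hH
  have harct : ∀ θ : ℝ,
      HasDerivAt (fun x => Real.arctan (s * Real.sin x / (1 - s * Real.cos x)))
        ((s * Real.cos θ - s ^ 2) / (1 + q - 2 * s * Real.cos θ)) θ := by
    intro θ
    have hu : HasDerivAt (fun x => s * Real.sin x / (1 - s * Real.cos x))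
        ((s * Real.cos θ * (1 - s * Real.cos θ)
          - s * Real.sin θ * (s * Real.sin θ)) / (1 - s * Real.cos θ) ^ 2) θ := by
      exact (((Real.hasDerivAt_sin θ).const_mul s).div
        ((((Real.hasDerivAt_cos θ).const_mul s).const_sub 1))
        (ne_of_gt (h1 θ))).congr_deriv (by ring)
    have := hu.arctan
    convert this using 1
    have pyth := Real.sin_sq_add_cos_sq θ
    have hd := (h1 θ).ne'
    have hDθ := (hD θ).ne'
    have e1 : s * Real.cos θ * (1 - s * Real.cos θ) - s * Real.sin θ * (s * Real.sin θ)
        = s * Real.cos θ - s ^ 2 := by linear_combination (-(s^2)) * pyth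
    have e3 : 1 + (s * Real.sin θ / (1 - s * Real.cos θ)) ^ 2
        = (1 + q - 2 * s * Real.cos θ) / (1 - s * Real.cos θ) ^ 2 := by
      rw [← hs2]
      field_simp
      linear_combination (s^2) * pyth
    rw [e1, e3]
    field_simp
  have key : ∀ θ : ℝ, HasDerivAt H
      ((q - 2 * s * Real.cos θ) ^ 2 * Real.sin θ ^ 2
        / (1 + q - 2 * s * Real.cos θ)) θ := by
    intro θ
    have h2x : HasDerivAt (fun x : ℝ => 2 * x) 2 θ := by
      simpa using (hasDerivAt_id θ).const_mul 2
    have hsin2 : HasDerivAt (fun x : ℝ => Real.sin (2 * x)) (Real.cos (2 * θ) * 2) θ :=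
      (Real.hasDerivAt_sin (2 * θ)).comp θ h2x
    have hsin3 : HasDerivAt (fun x : ℝ => Real.sin x ^ 3)
        (3 * Real.sin θ ^ 2 * Real.cos θ) θ := by
      simpa using ((Real.hasDerivAt_sin θ).fun_pow 3)
    have hmain : HasDerivAt H
        ((q - 1) * (1 / 2 - Real.cos (2 * θ) * 2 / 4)
          - (2 * s / 3) * (3 * Real.sin θ ^ 2 * Real.cos θ)
          + (1 + q) / (4 * q) * 1 + s / (2 * q) * Real.cos θ
          - (1 - q) / (4 * q) *
              (1 + 2 * ((s * Real.cos θ - s ^ 2) / (1 + q - 2 * s * Real.cos θ)))) θ := by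
      exact ((((((hasDerivAt_id θ).div_const 2).sub (hsin2.div_const 4)).const_mul
          (q - 1)).sub (hsin3.const_mul (2 * s / 3))).add
          ((hasDerivAt_id θ).const_mul ((1 + q) / (4 * q)))).add
          ((Real.hasDerivAt_sin θ).const_mul (s / (2 * q))) |>.sub
          (((hasDerivAt_id θ).add ((harct θ).const_mul 2)).const_mul ((1 - q) / (4 * q)))
    convert hmain using 1
    have pyth := Real.sin_sq_add_cos_sq θ
    have hsn2 : Real.sin θ ^ 2 = 1 - Real.cos θ ^ 2 := by linarith
    rw [Real.cos_two_mul, hsn2, ← hs2]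
    have hDθ' : 1 + s ^ 2 - 2 * s * Real.cos θ ≠ 0 := by
      rw [hs2]; exact (hD θ).ne'
    have hs2' : s ^ 2 ≠ 0 := by positivity
    have hDθ'' : 1 + s ^ 2 - s * 2 * Real.cos θ ≠ 0 := by convert hDθ' using 1; ring
    field_simp
    ring
  have hcont : Continuous fun θ =>
      (q - 2 * s * Real.cos θ) ^ 2 * Real.sin θ ^ 2
        / (1 + q - 2 * s * Real.cos θ) := by
    apply Continuous.div (by continuity) (by continuity)
    exact fun θ => (hD θ).ne'
  rw [intervalIntegral.integral_eq_sub_of_hasDerivAt (fun θ _ => key θ)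
    (hcont.intervalIntegrable _ _)]
  have hsin4pi : Real.sin (2 * (2 * Real.pi)) = 0 := by
    rw [show (2:ℝ) * (2 * Real.pi) = 2 * Real.pi + 2 * Real.pi by ring, Real.sin_add]
    simp
  have hq' : q ≠ 0 := hq0.ne'
  simp only [hH, hsin4pi, Real.sin_two_pi, Real.cos_two_pi, Real.sin_zero, Real.cos_zero,
    mul_zero, zero_div, Real.arctan_zero]
  field_simp
  ring
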